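/- Let A be a symmetric positive definite m-banded matrix with spectrum contained in [a, b], 0 < a ≤ b. Set r = b/a, q = (√r − 1)/(√r + 1), λ = q^{2/m}, C₀ = (1 + √r)²/(2ar), and C = max{a⁻¹, C₀}. Then the entries of the inverse satisfy |(A⁻¹)_{ij}| ≤ C·λ^{|i−j|} for all i, j. -/

import Mathlib

open Matrix Polynomial

namespace DMS

variable {n : ℕ} {A : Matrix (Fin n) (Fin n) ℝ} (hA : A.IsHermitian)

noncomputable def fc (hA : A.IsHermitian) (f : ℝ → ℝ) : Matrix (Fin n) (Fin n) ℝ :=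
  (hA.eigenvectorUnitary : Matrix (Fin n) (Fin n) ℝ) *
    diagonal (fun l => f (hA.eigenvalues l)) *
    star (hA.eigenvectorUnitary : Matrix (Fin n) (Fin n) ℝ)

lemma hU1 : (hA.eigenvectorUnitary : Matrix (Fin n) (Fin n) ℝ) *
    star (hA.eigenvectorUnitary : Matrix (Fin n) (Fin n) ℝ) = 1 :=
  Matrix.mem_unitaryGroup_iff.mp (hA.eigenvectorUnitary).2

lemma hU2 : star (hA.eigenvectorUnitary : Matrix (Fin n) (Fin n) ℝ) *
    (hA.eigenvectorUnitary : Matrix (Fin n) (Fin n) ℝ) = 1 :=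
  Matrix.mem_unitaryGroup_iff'.mp (hA.eigenvectorUnitary).2

lemma fc_congr {f g : ℝ → ℝ} (h : ∀ l, f (hA.eigenvalues l) = g (hA.eigenvalues l)) :
    fc hA f = fc hA g := by
  unfold fc
  rw [show (fun l => f (hA.eigenvalues l)) = (fun l => g (hA.eigenvalues l)) from funext h]

lemma fc_id : fc hA (fun x => x) = A := by
  conv_rhs => rw [hA.spectral_theorem]
  rfl

lemma fc_const (c : ℝ) : fc hA (fun _ => c) = c • (1 : Matrix (Fin n) (Fin n) ℝ) := by
  unfold fc
  rw [show (diagonal (fun _ : Fin n => c)) = c • (1 : Matrix (Fin n) (Fin n) ℝ) by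
      ext i j; by_cases h : i = j <;> simp [diagonal, Matrix.one_apply, h]]
  rw [Matrix.mul_smul, Matrix.smul_mul, mul_one, hU1]

lemma fc_one : fc hA (fun _ => 1) = 1 := by rw [fc_const]; simp

lemma fc_mul (f g : ℝ → ℝ) : fc hA f * fc hA g = fc hA (fun x => f x * g x) := by
  unfold fc
  set U : Matrix (Fin n) (Fin n) ℝ := (hA.eigenvectorUnitary : Matrix (Fin n) (Fin n) ℝ)
  set Df := diagonal (fun l => f (hA.eigenvalues l))
  set Dg := diagonal (fun l => g (hA.eigenvalues l))
  calc U * Df * star U * (U * Dg * star U) = U * (Df * (star U * U) * Dg) * star U := by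
        noncomm_ring
    _ = U * (Df * Dg) * star U := by rw [hU2]; noncomm_ring
    _ = _ := by rw [show Df * Dg = diagonal fun l => f (hA.eigenvalues l) * g (hA.eigenvalues l)
          from diagonal_mul_diagonal _ _]

lemma fc_add (f g : ℝ → ℝ) : fc hA f + fc hA g = fc hA (fun x => f x + g x) := by
  unfold fc
  rw [← add_mul, ← mul_add, diagonal_add]

lemma fc_sub (f g : ℝ → ℝ) : fc hA f - fc hA g = fc hA (fun x => f x - g x) := by
  unfold fc
  rw [← sub_mul, ← mul_sub, diagonal_sub]

lemma fc_smul (c : ℝ) (f : ℝ → ℝ) : c • fc hA f = fc hA (fun x => c * f x) := by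
  unfold fc
  rw [show (diagonal fun l => c * f (hA.eigenvalues l))
      = c • diagonal (fun l => f (hA.eigenvalues l)) by
        rw [← Matrix.diagonal_smul]; congr 1]
  simp [Matrix.mul_smul, Matrix.smul_mul]

lemma fc_pow (k : ℕ) : A ^ k = fc hA (fun x => x ^ k) := by
  induction k with
  | zero => simpa using (fc_one hA).symm
  | succ k ih =>
      have h1 : fc hA (fun x => x ^ k) * fc hA (fun x => x) = fc hA (fun x => x ^ (k+1)) := by
        rw [fc_mul]; exact fc_congr hA fun l => (pow_succ _ _).symm
      rw [pow_succ, ih, ← h1, fc_id]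

lemma fc_aeval (p : ℝ[X]) : (aeval A) p = fc hA (fun x => p.eval x) := by
  rw [aeval_eq_sum_range]
  have h : ∀ N : ℕ, ∑ i ∈ Finset.range N, p.coeff i • A ^ i
      = fc hA (fun x => ∑ i ∈ Finset.range N, p.coeff i * x ^ i) := by
    intro N
    induction N with
    | zero =>
        have h0 := fc_const hA 0
        rw [zero_smul] at h0
        simpa using h0.symm
    | succ N ih =>
        rw [Finset.sum_range_succ, ih, fc_pow hA N, fc_smul, fc_add]
        exact fc_congr hA fun l => by rw [Finset.sum_range_succ]
  rw [h]
  exact fc_congr hA fun l => by rw [eval_eq_sum_range]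

lemma fc_inv (hne : ∀ l, hA.eigenvalues l ≠ 0) : A⁻¹ = fc hA (fun x => x⁻¹) := by
  apply inv_eq_right_inv
  have h1 : fc hA (fun x => x) * fc hA (fun x => x⁻¹) = 1 := by
    rw [fc_mul, ← fc_one hA]
    exact fc_congr hA fun l => mul_inv_cancel₀ (hne l)
  rw [← h1, fc_id]

lemma fc_entry_bound (f : ℝ → ℝ) {K : ℝ} (hK : ∀ l, |f (hA.eigenvalues l)| ≤ K)
    (i j : Fin n) : |fc hA f i j| ≤ K := by
  set U : Matrix (Fin n) (Fin n) ℝ := (hA.eigenvectorUnitary : Matrix (Fin n) (Fin n) ℝ) with hU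
  have hrow : ∀ i : Fin n, ∑ l, (U i l) ^ 2 = 1 := by
    intro i
    have := congrFun (congrFun (hU1 hA) i) i
    simpa [Matrix.mul_apply, Matrix.one_apply, Matrix.star_apply, sq, hU] using this
  have hKnn : 0 ≤ K := le_trans (abs_nonneg _) (hK i)
  have hentry : fc hA f i j = ∑ l, U i l * f (hA.eigenvalues l) * U j l := by
    unfold fc
    rw [Matrix.mul_apply]
    refine Finset.sum_congr rfl fun l _ => ?_
    rw [Matrix.mul_diagonal, Matrix.star_apply, star_trivial]
  rw [hentry]
  calc |∑ l, U i l * f (hA.eigenvalues l) * U j l|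
      ≤ ∑ l, |U i l * f (hA.eigenvalues l) * U j l| := Finset.abs_sum_le_sum_abs _ _
    _ ≤ ∑ l, K * (|U i l| * |U j l|) := by
        apply Finset.sum_le_sum
        intro l _
        rw [abs_mul, abs_mul]
        calc |U i l| * |f (hA.eigenvalues l)| * |U j l|
            ≤ |U i l| * K * |U j l| := by
              apply mul_le_mul_of_nonneg_right _ (abs_nonneg _)
              exact mul_le_mul_of_nonneg_left (hK l) (abs_nonneg _)
          _ = K * (|U i l| * |U j l|) := by ring
    _ = K * ∑ l, |U i l| * |U j l| := by rw [Finset.mul_sum]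
    _ ≤ K * 1 := by
        apply mul_le_mul_of_nonneg_left _ hKnn
        have h2 := Finset.sum_mul_sq_le_sq_mul_sq Finset.univ (fun l => |U i l|) (fun l => |U j l|)
        have e1 : ∑ l, |U i l| ^ 2 = 1 := by simpa [sq_abs] using hrow i
        have e2 : ∑ l, |U j l| ^ 2 = 1 := by simpa [sq_abs] using hrow j
        rw [e1, e2, one_mul] at h2
        nlinarith [Finset.sum_nonneg (fun l (_ : l ∈ Finset.univ) =>
          mul_nonneg (abs_nonneg (U i l)) (abs_nonneg (U j l)))]
    _ = K := mul_one K


variable {n m : ℕ} {A : Matrix (Fin n) (Fin n) ℝ}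

lemma banded_pow (hband : ∀ i j : Fin n, (m : ℤ) < 2 * |(i : ℤ) - (j : ℤ)| → A i j = 0)
    (k : ℕ) : ∀ i j : Fin n, (k * m : ℤ) < 2 * |(i : ℤ) - (j : ℤ)| → (A ^ k) i j = 0 := by
  induction k with
  | zero =>
      intro i j h
      have : i ≠ j := by
        intro he; subst he; simp at h
      simp [Matrix.one_apply, this]
  | succ k ih =>
      intro i j h
      rw [pow_succ', Matrix.mul_apply]
      apply Finset.sum_eq_zero
      intro l _
      by_cases hil : (m : ℤ) < 2 * |(i : ℤ) - (l : ℤ)|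
      · rw [hband i l hil, zero_mul]
      · push_neg at hil
        have htri : |(i : ℤ) - (j : ℤ)| ≤ |(i : ℤ) - (l : ℤ)| + |(l : ℤ) - (j : ℤ)| := by
          have := abs_sub_abs_le_abs_sub ((i:ℤ) - l) ((j:ℤ) - l)
          calc |(i : ℤ) - (j : ℤ)| = |((i:ℤ) - l) - ((j:ℤ) - l)| := by ring_nf
            _ ≤ |(i : ℤ) - (l : ℤ)| + |(l : ℤ) - (j : ℤ)| := by
                have := abs_sub ((i:ℤ) - l) ((j:ℤ) - l)
                calc |((i:ℤ) - l) - ((j:ℤ) - l)| ≤ |(i:ℤ) - l| + |(j:ℤ) - l| := abs_sub _ _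
                  _ = |(i : ℤ) - (l : ℤ)| + |(l : ℤ) - (j : ℤ)| := by rw [abs_sub_comm ((j:ℤ)) _]
        have : (k * m : ℤ) < 2 * |(l : ℤ) - (j : ℤ)| := by push_cast at h ⊢; linarith
        rw [ih l j this, mul_zero]

lemma banded_aeval (hband : ∀ i j : Fin n, (m : ℤ) < 2 * |(i : ℤ) - (j : ℤ)| → A i j = 0)
    {k : ℕ} {p : ℝ[X]} (hdeg : p.natDegree ≤ k) :
    ∀ i j : Fin n, (k * m : ℤ) < 2 * |(i : ℤ) - (j : ℤ)| → (aeval A p) i j = 0 := by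
  intro i j h
  rw [aeval_eq_sum_range]
  rw [Matrix.sum_apply]
  apply Finset.sum_eq_zero
  intro l hl
  have hl' : l ≤ k := le_trans (Nat.lt_succ_iff.mp (Finset.mem_range.mp hl)) hdeg
  have : (l * m : ℤ) < 2 * |(i : ℤ) - (j : ℤ)| := by
    refine lt_of_le_of_lt ?_ h
    have : (l : ℤ) ≤ k := by exact_mod_cast hl'
    nlinarith [Int.ofNat_nonneg m]
  rw [Matrix.smul_apply, banded_pow hband l i j this, smul_zero]


noncomputable def φp (a s : ℝ) : ℝ[X] :=
  C ((1 + s^2)/(s^2 - 1)) + C (-(2/(a*(s^2 - 1)))) * X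

/-- near-best polynomial approximation to `1/x` on `[a, a s²]` -/
noncomputable def Pp (a s : ℝ) (k : ℕ) : ℝ[X] :=
  C (1/(a*s)) * (1 + 2 * ∑ l ∈ Finset.range k,
      C (((s-1)/(s+1))^(l+1)) * (Chebyshev.T ℝ ((l+1 : ℕ) : ℤ)).comp (φp a s)) +
    C (2*((s-1)/(s+1))^(k+2)/((1-((s-1)/(s+1))^2)*a*s)) * (Chebyshev.T ℝ ((k : ℕ) : ℤ)).comp (φp a s)

lemma natDegree_T_le : ∀ l : ℕ, (Chebyshev.T ℝ (l : ℤ)).natDegree ≤ l := by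
  have key : ∀ l : ℕ, (Chebyshev.T ℝ (l : ℤ)).natDegree ≤ l ∧
      (Chebyshev.T ℝ ((l+1 : ℕ) : ℤ)).natDegree ≤ l + 1 := by
    intro l
    induction l with
    | zero =>
        constructor
        · simp [Chebyshev.T_zero]
        · simpa [Chebyshev.T_one] using Polynomial.natDegree_X_le
    | succ l ih =>
        refine ⟨ih.2, ?_⟩
        have hcast : ((l + 2 : ℕ) : ℤ) = (l : ℤ) + 2 := by push_cast; ring
        rw [hcast, Chebyshev.T_add_two]
        refine le_trans (natDegree_sub_le _ _) (max_le ?_ (le_trans ih.1 (by omega)))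
        refine le_trans (natDegree_mul_le) ?_
        have hX : (2 * X : ℝ[X]).natDegree ≤ 1 :=
          le_trans natDegree_mul_le (by simp)
        have hT : (Chebyshev.T ℝ ((l:ℤ) + 1)).natDegree ≤ l + 1 := by
          have h := ih.2; push_cast at h; exact h
        omega
  exact fun l => (key l).1

lemma natDegree_φp_le (a s : ℝ) : (φp a s).natDegree ≤ 1 := by
  unfold φp
  refine le_trans (natDegree_add_le _ _) ?_
  simp only [natDegree_C]
  refine max_le (by omega) (le_trans natDegree_mul_le ?_)
  simp

lemma natDegree_Pp_le (a s : ℝ) (k : ℕ) : (Pp a s k).natDegree ≤ k := by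
  have hT : ∀ l : ℕ, l ≤ k → ((Chebyshev.T ℝ (l:ℤ)).comp (φp a s)).natDegree ≤ k := by
    intro l hl
    refine le_trans natDegree_comp_le ?_
    calc (Chebyshev.T ℝ (l:ℤ)).natDegree * (φp a s).natDegree
        ≤ l * 1 := Nat.mul_le_mul (natDegree_T_le l) (natDegree_φp_le a s)
      _ ≤ k := by omega
  unfold Pp
  refine le_trans (natDegree_add_le _ _) (max_le ?_ ?_)
  · refine le_trans natDegree_mul_le ?_
    rw [natDegree_C]
    refine le_trans (Nat.add_le_add_left (natDegree_add_le _ _) 0) ?_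
    simp only [zero_add, natDegree_one]
    refine max_le (by omega) ?_
    refine le_trans natDegree_mul_le ?_
    have : (2 : ℝ[X]).natDegree = 0 := natDegree_ofNat 2
    rw [this, zero_add]
    refine le_trans (natDegree_sum_le_of_forall_le _ _ ?_) le_rfl
    intro l hl
    refine le_trans natDegree_mul_le ?_
    rw [natDegree_C, zero_add]
    exact_mod_cast hT (l+1) (Nat.succ_le_of_lt (Finset.mem_range.mp hl))
  · refine le_trans natDegree_mul_le ?_
    rw [natDegree_C, zero_add]
    exact hT k le_rfl


set_option maxHeartbeats 1000000 in
lemma scalar_est (a s : ℝ) (ha : 0 < a) (hs : 1 < s) (k : ℕ) {x : ℝ}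
    (hx1 : a ≤ x) (hx2 : x ≤ a * s^2) :
    |x⁻¹ - (Pp a s k).eval x| ≤ (1+s)^2/(2*a*s^2) * ((s-1)/(s+1))^(k+1) := by
  have hs0 : (0:ℝ) < s := lt_trans one_pos hs
  have hsp : (0:ℝ) < s + 1 := by linarith
  have hsm : (0:ℝ) < s - 1 := by linarith
  have hsm2 : s^2 - 1 ≠ 0 := by nlinarith
  set q : ℝ := (s-1)/(s+1) with hqdef
  have hq0 : 0 < q := div_pos hsm hsp
  have hq1 : q < 1 := by rw [div_lt_one hsp]; linarith
  have hq2 : (0:ℝ) < 1 - q^2 := by nlinarith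
  have hx0 : (0:ℝ) < x := lt_of_lt_of_le ha hx1
  have has : (0:ℝ) < a * s := mul_pos ha hs0
  have hden : (0:ℝ) < a*(s^2-1) := by nlinarith
  set t : ℝ := (a*(1+s^2) - 2*x)/(a*(s^2-1)) with htdef
  have hφ : (φp a s).eval x = t := by
    unfold φp; simp only [eval_add, eval_mul, eval_C, eval_X]
    rw [htdef]; field_simp [ne_of_gt ha, hsm2]; ring
  have ht1 : -1 ≤ t := by
    rw [htdef, le_div_iff₀ hden]; nlinarith
  have ht2 : t ≤ 1 := by
    rw [htdef, div_le_iff₀ hden]; nlinarith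
  set θ : ℝ := Real.arccos t with hθdef
  have hcos : Real.cos θ = t := Real.cos_arccos ht1 ht2
  set z : ℂ := (q:ℂ) * Complex.exp (θ * Complex.I) with hzdef
  have habs : ‖z‖ = q := by
    rw [hzdef, norm_mul, Complex.norm_real, Real.norm_eq_abs, Complex.norm_exp_ofReal_mul_I, mul_one,
      abs_of_pos hq0]
  have hz1 : (1:ℂ) - z ≠ 0 := by
    intro h
    have : z = 1 := by linear_combination -h
    rw [this] at habs; simp at habs; linarith
  have hzne1 : z ≠ 1 := fun h => hz1 (by rw [h]; ring)
  have habs1z : ‖1 - z‖ ≠ 0 := norm_ne_zero_iff.mpr hz1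
  have hq2c : (1:ℂ) - (q:ℂ)^2 ≠ 0 := by
    have h := Complex.ofReal_ne_zero.mpr (ne_of_gt hq2)
    push_cast at h; exact h
  have hzpow : ∀ l : ℕ, (z^l).re = q^l * Real.cos (l*θ) := by
    intro l
    rw [hzdef, mul_pow, ← Complex.ofReal_pow, ← Complex.exp_nat_mul]
    have h : ((l:ℂ) * ((θ:ℂ) * Complex.I)) = ((l*θ : ℝ):ℂ) * Complex.I := by push_cast; ring
    rw [h, Complex.re_ofReal_mul, Complex.exp_ofReal_mul_I_re]
  have hcheb : ∀ l : ℕ, ((Chebyshev.T ℝ (l:ℤ)).comp (φp a s)).eval x = Real.cos (l*θ) := by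
    intro l
    rw [eval_comp, hφ, ← hcos, Chebyshev.T_real_cos θ (l:ℤ)]
    norm_num
  have hre : z.re = q * t := by
    rw [hzdef, Complex.re_ofReal_mul, Complex.exp_ofReal_mul_I_re, hcos]
  have him : z.im = q * Real.sin θ := by
    rw [hzdef, Complex.im_ofReal_mul, Complex.exp_ofReal_mul_I_im]
  have hD : (0:ℝ) < 1 - 2*q*t + q^2 := by nlinarith
  have hsc : Real.sin θ ^ 2 + t ^ 2 = 1 := by
    have h := Real.sin_sq_add_cos_sq θ; rw [hcos] at h; exact h
  have hnormSq : Complex.normSq (1 - z) = 1 - 2*q*t + q^2 := by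
    rw [Complex.normSq_apply]
    simp only [Complex.sub_re, Complex.sub_im, Complex.one_re, Complex.one_im, hre, him]
    nlinarith [hsc]
  have hdivre : ((1+z)/(1-z)).re = (1 - q^2) / (1 - 2*q*t + q^2) := by
    rw [Complex.div_re, hnormSq]
    simp only [Complex.add_re, Complex.add_im, Complex.sub_re, Complex.sub_im,
      Complex.one_re, Complex.one_im, hre, him]
    rw [← add_div]
    congr 1
    linear_combination (-(q^2))*hsc
  have hkey : x * (1 - q^2) = a * s * (1 - 2*q*t + q^2) := by
    rw [hqdef, htdef]
    field_simp
    ring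
  have hxinv : x⁻¹ = (1/(a*s)) * ((1+z)/(1-z)).re := by
    rw [hdivre]
    rw [div_mul_div_comm, one_mul, eq_div_iff (by positivity)]
    field_simp
    first
    | linear_combination hkey
    | linear_combination -hkey
    | linarith [hkey]
  have hsumz : ∑ l ∈ Finset.range k, (z^(l+1)) = z * (1 - z^k)/(1-z) := by
    have hg := geom_sum_eq hzne1 k
    calc ∑ l ∈ Finset.range k, z^(l+1) = z * ∑ l ∈ Finset.range k, z^l := by
          rw [Finset.mul_sum]; exact Finset.sum_congr rfl fun l _ => pow_succ' z l
      _ = z * ((z^k - 1)/(z - 1)) := by rw [hg]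
      _ = z * (1 - z^k)/(1-z) := by
          rw [mul_div_assoc]
          congr 1
          rw [div_eq_div_iff (sub_ne_zero.mpr hzne1) hz1]
          ring
  have hsumre : ∑ l ∈ Finset.range k, q^(l+1) * Real.cos ((l+1 : ℕ)*θ)
      = (z * (1 - z^k)/(1-z)).re := by
    rw [← hsumz, Complex.re_sum]
    exact Finset.sum_congr rfl fun l _ => (hzpow (l+1)).symm
  have heval : (Pp a s k).eval x
      = (1/(a*s)) * (1 + 2 * ∑ l ∈ Finset.range k, q^(l+1) * Real.cos ((l+1 : ℕ)*θ))
        + (2*q^(k+2)/((1-q^2)*a*s)) * Real.cos ((k : ℕ)*θ) := by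
    unfold Pp
    rw [← hqdef]
    simp only [eval_add, eval_mul, eval_C, eval_one, eval_ofNat, eval_finset_sum, hcheb]
  set W : ℂ := (1+z)/(1-z) - 1 - 2*(z*(1-z^k)/(1-z)) - ((2*q^2/(1-q^2) : ℝ) : ℂ) * z^k
    with hWdef
  have hWre : W.re = ((1+z)/(1-z)).re - 1 - 2*((z*(1-z^k)/(1-z)).re)
      - (2*q^2/(1-q^2)) * (z^k).re := by
    have h2v : ∀ v : ℂ, ((2:ℂ)*v).re = 2*v.re := fun v => by
      rw [show (2:ℂ) = ((2:ℝ):ℂ) by norm_num, Complex.re_ofReal_mul]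
    rw [hWdef, Complex.sub_re, Complex.sub_re, Complex.sub_re, Complex.one_re,
      Complex.re_ofReal_mul, h2v]
  have hassemble : x⁻¹ - (Pp a s k).eval x = (1/(a*s)) * W.re := by
    rw [hxinv, heval, hWre, hsumre, hzpow k]
    field_simp
    ring
  have hWw : W = 2*z^k*(z - (q:ℂ)^2)/((1-z)*(1-(q:ℂ)^2)) := by
    rw [hWdef]
    push_cast
    field_simp
    ring
  have hWabs : ‖W‖ = 2*q^(k+1)/(1-q^2) := by
    rw [hWw]
    have hzq : z - (q:ℂ)^2 = z * (1 - (starRingEnd ℂ) z) := by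
      have hmc : z * (starRingEnd ℂ) z = ((q^2:ℝ):ℂ) := by
        rw [Complex.mul_conj, Complex.normSq_eq_norm_sq, habs]
      rw [mul_sub, mul_one, hmc]; norm_cast
    have hconjabs : ‖1 - (starRingEnd ℂ) z‖ = ‖1 - z‖ := by
      rw [show (1:ℂ) - (starRingEnd ℂ) z = (starRingEnd ℂ) (1 - z) by rw [_root_.map_sub, _root_.map_one],
        Complex.norm_conj]
    have habsq2 : ‖1 - (q:ℂ)^2‖ = 1 - q^2 := by
      rw [show (1:ℂ) - (q:ℂ)^2 = ((1-q^2:ℝ):ℂ) by push_cast; ring, Complex.norm_real, Real.norm_eq_abs,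
        abs_of_pos hq2]
    have hnum : ‖2*z^k*(z - (q:ℂ)^2)‖ = 2*q^k*(q*‖1-z‖) := by
      rw [norm_mul, norm_mul, norm_pow, habs, hzq, norm_mul, hconjabs, habs, Complex.norm_two]
    have hden2 : ‖(1-z)*(1-(q:ℂ)^2)‖ = ‖1-z‖ * (1-q^2) := by
      rw [norm_mul, habsq2]
    rw [norm_div, hnum, hden2]
    field_simp [habs1z]
    ring
  have hconst : (1/(a*s)) * (2*q^(k+1)/(1-q^2)) = (1+s)^2/(2*a*s^2) * q^(k+1) := by
    have h1mq : 1 - q^2 = 4*s/((s+1)^2) := by rw [hqdef]; field_simp; ring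
    rw [h1mq]
    field_simp
    ring
  calc |x⁻¹ - (Pp a s k).eval x| = (1/(a*s)) * |W.re| := by
        rw [hassemble, abs_mul, abs_of_pos (by positivity : (0:ℝ) < 1/(a*s))]
    _ ≤ (1/(a*s)) * ‖W‖ := by
        exact mul_le_mul_of_nonneg_left (Complex.abs_re_le_norm W) (by positivity)
    _ = (1+s)^2/(2*a*s^2) * q^(k+1) := by rw [hWabs]; exact hconst


end DMS

/-- **Demko–Moss–Smith.** Let `A` be a symmetric positive definite `m`-banded matrix
with spectrum in `[a, b]`, `0 < a ≤ b`. With `r = b/a`, `q = (√r - 1)/(√r + 1)`,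
`λ = q^(2/m)`, `C₀ = (1 + √r)²/(2 a r)` and `C = max a⁻¹ C₀`, the entries of the
inverse decay exponentially: `|(A⁻¹) i j| ≤ C λ^|i - j|`. -/
theorem banded_inverse_decay {n : ℕ} (m : ℕ) (hm : 0 < m)
    (A : Matrix (Fin n) (Fin n) ℝ) (hA : A.IsHermitian) (hPD : A.PosDef)
    (a b : ℝ) (ha : 0 < a) (hab : a ≤ b)
    (heig : ∀ i, a ≤ hA.eigenvalues i ∧ hA.eigenvalues i ≤ b)
    (hband : ∀ i j : Fin n, (m : ℝ) / 2 < |(i : ℤ) - (j : ℤ)| → A i j = 0) :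
    ∀ i j : Fin n,
      |A⁻¹ i j| ≤
        (max a⁻¹ ((1 + Real.sqrt (b / a)) ^ 2 / (2 * a * (b / a)))) *
          (((Real.sqrt (b / a) - 1) / (Real.sqrt (b / a) + 1)) ^ ((2 : ℝ) / m)) ^
            ((i : ℤ) - (j : ℤ)).natAbs := by
  intro i j
  set s : ℝ := Real.sqrt (b/a) with hsdef
  have hba1 : 1 ≤ b/a := (one_le_div ha).mpr hab
  have hs2 : s^2 = b/a := Real.sq_sqrt (by positivity)
  have hs1 : 1 ≤ s := by nlinarith [Real.sqrt_nonneg (b/a)]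
  have hb : a * s^2 = b := by rw [hs2]; field_simp
  rw [show b/a = s^2 from hs2.symm]
  set q : ℝ := (s-1)/(s+1) with hqdef
  have hq0' : 0 ≤ q := div_nonneg (by linarith) (by linarith)
  set lam : ℝ := q ^ ((2:ℝ)/m) with hlamdef
  have hlam0 : 0 ≤ lam := Real.rpow_nonneg hq0' _
  set dd : ℕ := ((i:ℤ) - (j:ℤ)).natAbs with hdd
  have heig' : ∀ l, a ≤ hA.eigenvalues l ∧ hA.eigenvalues l ≤ a * s^2 := by
    intro l; rw [hb]; exact heig l
  have hne : ∀ l, hA.eigenvalues l ≠ 0 := fun l => ne_of_gt (lt_of_lt_of_le ha (heig l).1)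
  have hinv := DMS.fc_inv hA hne
  have hCnn : 0 ≤ max a⁻¹ ((1+s)^2/(2*a*s^2)) :=
    le_trans (inv_nonneg.mpr ha.le) (le_max_left _ _)
  rcases Nat.eq_zero_or_pos dd with hd0 | hdpos
  · rw [hd0, pow_zero, mul_one]
    refine le_trans ?_ (le_max_left _ _)
    rw [hinv]
    refine DMS.fc_entry_bound hA _ (fun l => ?_) i j
    have hl := (heig l).1
    rw [abs_of_pos (inv_pos.mpr (lt_of_lt_of_le ha hl))]
    exact inv_anti₀ ha hl
  · have hij : i ≠ j := by
      intro h; subst h; simp [hdd] at hdpos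
    rcases eq_or_lt_of_le hab with hEq | hlt
    · -- a = b : all eigenvalues equal a, inverse is scalar
      have hsa : s = 1 := by rw [hsdef, ← hEq, div_self ha.ne', Real.sqrt_one]
      have hqz : q = 0 := by rw [hqdef, hsa]; norm_num
      have hlz : lam = 0 := by
        rw [hlamdef, hqz]
        exact Real.zero_rpow (div_ne_zero two_ne_zero (Nat.cast_ne_zero.mpr hm.ne'))
      have heiga : ∀ l, hA.eigenvalues l = a :=
        fun l => le_antisymm (hEq ▸ (heig l).2) (heig l).1
      have hz : A⁻¹ i j = 0 := by
        rw [hinv, DMS.fc_congr hA (g := fun _ => a⁻¹) (fun l => by rw [heiga l]),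
          DMS.fc_const]
        simp [Matrix.smul_apply, Matrix.one_apply_ne hij]
      rw [hz, hlz, zero_pow hdpos.ne', mul_zero, abs_zero]
    · -- a < b
      have hs1' : 1 < s := by
        have h1 : 1 < b/a := (one_lt_div ha).mpr hlt
        nlinarith [Real.sqrt_nonneg (b/a)]
      have hq0 : 0 < q := div_pos (by linarith) (by linarith)
      have hq1 : q < 1 := by rw [hqdef, div_lt_one (by linarith)]; linarith
      have hm' : (0:ℝ) < (m:ℝ) := Nat.cast_pos.mpr hm
      have hddpos : (0:ℝ) < (dd:ℝ) := Nat.cast_pos.mpr hdpos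
      set K : ℕ := ⌈(2*(dd:ℝ)/(m:ℝ))⌉₊ with hKdef
      have hK1 : 1 ≤ K := Nat.one_le_ceil_iff.mpr (by positivity)
      set k : ℕ := K - 1 with hkdef
      have hkK : k + 1 = K := Nat.succ_pred_eq_of_pos hK1
      have hband' : ∀ i' j' : Fin n, (m:ℤ) < 2*|(i' : ℤ) - (j' : ℤ)| → A i' j' = 0 := by
        intro i' j' h
        refine hband i' j' ?_
        have h2 : ((m:ℤ) : ℝ) < ((2*|(i' : ℤ) - (j' : ℤ)| : ℤ) : ℝ) := Int.cast_lt.mpr h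
        push_cast at h2 ⊢
        linarith
      have hcond : ((k*m : ℕ) : ℤ) < 2*|(i : ℤ) - (j : ℤ)| := by
        have habs_eq : |(i : ℤ) - (j : ℤ)| = (dd : ℤ) := Int.abs_eq_natAbs _
        rw [habs_eq]
        have hceil : (K:ℝ) < 2*(dd:ℝ)/(m:ℝ) + 1 := by
          rw [hKdef]; exact Nat.ceil_lt_add_one (by positivity)
        have hkR : (k:ℝ) < 2*(dd:ℝ)/(m:ℝ) := by
          have hkc : (k:ℝ) = (K:ℝ) - 1 := by
            rw [hkdef, Nat.cast_sub hK1]; norm_num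
          rw [hkc]; linarith
        have hmul : ((k:ℝ))*(m:ℝ) < 2*(dd:ℝ) := by
          have := mul_lt_mul_of_pos_right hkR hm'
          rwa [div_mul_cancel₀ _ hm'.ne'] at this
        exact_mod_cast hmul
      have hzero : (Polynomial.aeval A) (DMS.Pp a s k) i j = 0 :=
        DMS.banded_aeval hband' (DMS.natDegree_Pp_le a s k) i j (by exact_mod_cast hcond)
      have hentry : |A⁻¹ i j| ≤ (1+s)^2/(2*a*s^2) * q^(k+1) := by
        have hdiff : A⁻¹ - (Polynomial.aeval A) (DMS.Pp a s k)
            = DMS.fc hA (fun x => x⁻¹ - (DMS.Pp a s k).eval x) := by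
          rw [hinv, DMS.fc_aeval hA, DMS.fc_sub]
        have h1 : |A⁻¹ i j| = |(A⁻¹ - (Polynomial.aeval A) (DMS.Pp a s k)) i j| := by
          rw [Matrix.sub_apply, hzero, sub_zero]
        rw [h1, hdiff]
        refine DMS.fc_entry_bound hA _ (fun l => ?_) i j
        exact DMS.scalar_est a s ha hs1' k (heig' l).1 (heig' l).2
      refine le_trans hentry ?_
      have hqK : q^(k+1) ≤ lam^dd := by
        have e1 : q^(k+1) = q ^ ((K:ℝ)) := by
          rw [hkK, Real.rpow_natCast]
        have e2 : lam^dd = q ^ (((2:ℝ)/m)*(dd:ℝ)) := by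
          rw [hlamdef, ← Real.rpow_natCast (q ^ ((2:ℝ)/m)) dd, ← Real.rpow_mul hq0.le]
        rw [e1, e2]
        apply Real.rpow_le_rpow_of_exponent_ge hq0 hq1.le
        have := Nat.le_ceil (2*(dd:ℝ)/(m:ℝ))
        calc (2:ℝ)/m*(dd:ℝ) = 2*(dd:ℝ)/(m:ℝ) := by ring
          _ ≤ (K:ℝ) := this
      calc (1+s)^2/(2*a*s^2) * q^(k+1)
          ≤ (max a⁻¹ ((1+s)^2/(2*a*s^2))) * q^(k+1) :=
            mul_le_mul_of_nonneg_right (le_max_right _ _) (pow_nonneg hq0.le _)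
        _ ≤ (max a⁻¹ ((1+s)^2/(2*a*s^2))) * lam^dd :=
            mul_le_mul_of_nonneg_left hqK hCnn
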